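/- Under hypotheses (A₁) and (A₂), the operator A (where Aη is the unique solution of -u'' + M²u = f(t,η) + M²η with periodic boundary conditions) is monotone nondecreasing on the order interval [α, β]: if η₁ ≤ η₂ pointwise with α ≤ η₁ ≤ η₂ ≤ β, then Aη₁ ≤ Aη₂ pointwise on [0,2π]. -/

import Mathlib

open Real Set

/-- Key step: a `C²` function satisfying `M² w ≤ w''` on `[0, 2π]` cannot have a
positive maximum at a point `t₀ ∈ [0, 2π)` where `w' t₀ = 0`. -/
lemma key_max (w : ℝ → ℝ) (hw : ContDiff ℝ 2 w) (M : ℝ) (hM : 0 < M)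
    (hode : ∀ t ∈ Set.Icc (0:ℝ) (2 * π), M ^ 2 * w t ≤ deriv (deriv w) t)
    (t₀ : ℝ) (ht₀ : t₀ ∈ Set.Ico (0:ℝ) (2 * π))
    (hmax : ∀ t ∈ Set.Icc (0:ℝ) (2 * π), w t ≤ w t₀)
    (hpos : 0 < w t₀) (hd : deriv w t₀ = 0) : False := by
  have hdw : Differentiable ℝ w := hw.differentiable two_ne_zero
  have hdw1 : ContDiff ℝ 1 (deriv w) :=
    (contDiff_succ_iff_deriv.mp (show ContDiff ℝ (1 + 1) w by norm_num; exact hw)).2.2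
  have hdw1' : Differentiable ℝ (deriv w) := hdw1.differentiable one_ne_zero
  have hcw : Continuous w := hw.continuous
  -- find δ > 0 with t₀ + δ ≤ 2π and w > 0 on [t₀, t₀ + δ]
  have hev : ∀ᶠ t in nhds t₀, 0 < w t := (hcw.tendsto t₀).eventually (eventually_gt_nhds hpos)
  rw [Metric.eventually_nhds_iff] at hev
  obtain ⟨ε, hε, hball⟩ := hev
  set δ : ℝ := min (ε / 2) (2 * π - t₀) with hδdef
  have hδ : 0 < δ := lt_min (by linarith) (by linarith [ht₀.2])
  have hle2π : t₀ + δ ≤ 2 * π := by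
    have : δ ≤ 2 * π - t₀ := min_le_right _ _
    linarith
  have hsub : Set.Icc t₀ (t₀ + δ) ⊆ Set.Icc (0:ℝ) (2 * π) :=
    Set.Icc_subset_Icc ht₀.1 hle2π
  have hwpos : ∀ t ∈ Set.Icc t₀ (t₀ + δ), 0 < w t := by
    intro t ht
    apply hball
    have h1 : δ ≤ ε / 2 := min_le_left _ _
    rw [Real.dist_eq, abs_lt]
    constructor <;> [skip; skip] <;> cases' ht with h2 h3 <;> linarith
  -- deriv w is strictly monotone on [t₀, t₀+δ]
  have hmono : StrictMonoOn (deriv w) (Set.Icc t₀ (t₀ + δ)) := by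
    apply strictMonoOn_of_deriv_pos (convex_Icc _ _) hdw1.continuous.continuousOn
    intro t ht
    rw [interior_Icc] at ht
    have htmem : t ∈ Set.Icc t₀ (t₀ + δ) := Set.Ioo_subset_Icc_self ht
    have h1 := hode t (hsub htmem)
    have h2 := hwpos t htmem
    nlinarith [mul_pos (pow_pos hM 2) h2]
  have hderivpos : ∀ t ∈ Set.Ioo t₀ (t₀ + δ), 0 < deriv w t := by
    intro t ht
    have := hmono (Set.left_mem_Icc.2 (by linarith)) (Set.Ioo_subset_Icc_self ht) ht.1
    rw [hd] at this
    exact this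
  have hwmono : StrictMonoOn w (Set.Icc t₀ (t₀ + δ)) := by
    apply strictMonoOn_of_deriv_pos (convex_Icc _ _) hcw.continuousOn
    intro t ht
    rw [interior_Icc] at ht
    exact hderivpos t ht
  have := hwmono (Set.left_mem_Icc.2 (by linarith)) (Set.right_mem_Icc.2 (by linarith))
    (by linarith)
  have := hmax (t₀ + δ) (hsub (Set.right_mem_Icc.2 (by linarith)))
  linarith

theorem stmt14 (M : ℝ) (hM : 0 < M) (f : ℝ → ℝ → ℝ)
    (hf : Continuous (Function.uncurry f))
    (α β : ℝ → ℝ) (hα : ContDiff ℝ 2 α) (hβ : ContDiff ℝ 2 β)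
    (hαβ : ∀ t ∈ Set.Icc (0:ℝ) (2 * π), α t ≤ β t)
    (hlip : ∀ t ∈ Set.Icc (0:ℝ) (2 * π), ∀ u v : ℝ,
      α t ≤ v → v ≤ u → u ≤ β t → f t u - f t v ≥ -(M ^ 2) * (u - v))
    (hαlow : ∀ t ∈ Set.Icc (0:ℝ) (2 * π), -(deriv (deriv α) t) ≤ f t (α t))
    (hα0 : α 0 - α (2 * π) < 0) (hα1 : deriv α 0 - deriv α (2 * π) ≥ 0)
    (hβup : ∀ t ∈ Set.Icc (0:ℝ) (2 * π), -(deriv (deriv β) t) ≥ f t (β t))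
    (hβ0 : β 0 - β (2 * π) > 0) (hβ1 : deriv β 0 - deriv β (2 * π) ≤ 0)
    (η₁ η₂ : ℝ → ℝ) (hη₁ : Continuous η₁) (hη₂ : Continuous η₂)
    (hη₁mem : ∀ t ∈ Set.Icc (0:ℝ) (2 * π), α t ≤ η₁ t ∧ η₁ t ≤ β t)
    (hη₂mem : ∀ t ∈ Set.Icc (0:ℝ) (2 * π), α t ≤ η₂ t ∧ η₂ t ≤ β t)
    (hη₁₂ : ∀ t ∈ Set.Icc (0:ℝ) (2 * π), η₁ t ≤ η₂ t)
    (u₁ u₂ : ℝ → ℝ) (hu₁ : ContDiff ℝ 2 u₁) (hu₂ : ContDiff ℝ 2 u₂)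
    (heq₁ : ∀ t ∈ Set.Icc (0:ℝ) (2 * π),
      -(deriv (deriv u₁) t) + M ^ 2 * u₁ t = f t (η₁ t) + M ^ 2 * η₁ t)
    (heq₂ : ∀ t ∈ Set.Icc (0:ℝ) (2 * π),
      -(deriv (deriv u₂) t) + M ^ 2 * u₂ t = f t (η₂ t) + M ^ 2 * η₂ t)
    (hbc₁0 : u₁ 0 = u₁ (2 * π)) (hbc₁1 : deriv u₁ 0 = deriv u₁ (2 * π))
    (hbc₂0 : u₂ 0 = u₂ (2 * π)) (hbc₂1 : deriv u₂ 0 = deriv u₂ (2 * π)) :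
    ∀ t ∈ Set.Icc (0:ℝ) (2 * π), u₁ t ≤ u₂ t := by
  have hπ : 0 < π := Real.pi_pos
  set w : ℝ → ℝ := fun t => u₁ t - u₂ t with hwdef
  have hw : ContDiff ℝ 2 w := hu₁.sub hu₂
  have hdu₁ : Differentiable ℝ u₁ := hu₁.differentiable two_ne_zero
  have hdu₂ : Differentiable ℝ u₂ := hu₂.differentiable two_ne_zero
  have hdw : Differentiable ℝ w := hw.differentiable two_ne_zero
  have hddu₁ : Differentiable ℝ (deriv u₁) :=
    ((contDiff_succ_iff_deriv.mp
      (show ContDiff ℝ (1 + 1) u₁ by norm_num; exact hu₁)).2.2).differentiable one_ne_zero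
  have hddu₂ : Differentiable ℝ (deriv u₂) :=
    ((contDiff_succ_iff_deriv.mp
      (show ContDiff ℝ (1 + 1) u₂ by norm_num; exact hu₂)).2.2).differentiable one_ne_zero
  have hder : deriv w = fun t => deriv u₁ t - deriv u₂ t :=
    funext fun t => deriv_sub (hdu₁ t) (hdu₂ t)
  have hdder : ∀ t, deriv (deriv w) t = deriv (deriv u₁) t - deriv (deriv u₂) t := by
    intro t
    rw [hder]
    exact deriv_sub (hddu₁ t) (hddu₂ t)
  -- the differential inequality for w
  have hode : ∀ t ∈ Set.Icc (0:ℝ) (2 * π), M ^ 2 * w t ≤ deriv (deriv w) t := by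
    intro t ht
    have h1 := heq₁ t ht
    have h2 := heq₂ t ht
    have h3 := hlip t ht (η₂ t) (η₁ t) (hη₁mem t ht).1 (hη₁₂ t ht) (hη₂mem t ht).2
    have h4 := hdder t
    have hwt : w t = u₁ t - u₂ t := rfl
    rw [hwt, h4]
    linarith
  -- boundary conditions for w
  have hw0 : w 0 = w (2 * π) := by simp only [hwdef]; rw [hbc₁0, hbc₂0]
  have hdw0 : deriv w 0 = deriv w (2 * π) := by rw [hder]; simp only []; rw [hbc₁1, hbc₂1]
  -- maximum of w on [0, 2π]
  have hcompact : IsCompact (Set.Icc (0:ℝ) (2 * π)) := isCompact_Icc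
  obtain ⟨t₀, ht₀, hmax'⟩ := hcompact.exists_isMaxOn (Set.nonempty_Icc.2 (by linarith))
    hw.continuous.continuousOn
  have hmax : ∀ t ∈ Set.Icc (0:ℝ) (2 * π), w t ≤ w t₀ := fun t ht => hmax' ht
  suffices h : w t₀ ≤ 0 by
    intro t ht
    have := hmax t ht
    have hwt : w t = u₁ t - u₂ t := rfl
    linarith [hmax t ht]
  by_contra hpos
  push_neg at hpos
  -- case analysis on the location of the max
  -- endpoint case helper: if 0 is a max point with w 0 > 0, contradiction
  have endpoint_case : ∀ s₀ : ℝ, s₀ = 0 ∨ s₀ = 2 * π → w s₀ = w t₀ → False := by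
    intro s₀ hs₀ hws₀
    have hmax0 : ∀ t ∈ Set.Icc (0:ℝ) (2 * π), w t ≤ w 0 := by
      intro t ht
      rcases hs₀ with h | h
      · rw [← h, hws₀]; exact hmax t ht
      · rw [hw0, ← h, hws₀]; exact hmax t ht
    have hw0pos : 0 < w 0 := by
      rcases hs₀ with h | h
      · rw [← h] at hpos ⊢; rwa [hws₀]
      · rw [hw0, ← h, hws₀]; exact hpos
    -- derivative at 0 is ≤ 0
    have hmaxon0 : IsLocalMaxOn w (Set.Icc (0:ℝ) (2 * π)) 0 :=
      (isMaxOn_iff.mpr hmax0).localize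
    have hmaxon2π : IsLocalMaxOn w (Set.Icc (0:ℝ) (2 * π)) (2 * π) :=
      (isMaxOn_iff.mpr (fun t ht => hw0 ▸ hmax0 t ht)).localize
    have hcone1 : (1:ℝ) ∈ posTangentConeAt (Set.Icc (0:ℝ) (2 * π)) 0 := by
      have hseg : segment ℝ (0:ℝ) 1 ⊆ Set.Icc (0:ℝ) (2 * π) := by
        rw [segment_eq_Icc zero_le_one]
        exact Set.Icc_subset_Icc le_rfl (by nlinarith [Real.pi_gt_three])
      simpa using sub_mem_posTangentConeAt_of_segment_subset hseg
    have hcone2 : (-1:ℝ) ∈ posTangentConeAt (Set.Icc (0:ℝ) (2 * π)) (2 * π) := by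
      have hseg : segment ℝ (2 * π) (2 * π - 1) ⊆ Set.Icc (0:ℝ) (2 * π) := by
        rw [segment_symm, segment_eq_Icc (by linarith)]
        exact Set.Icc_subset_Icc (by nlinarith [Real.pi_gt_three]) le_rfl
      have := sub_mem_posTangentConeAt_of_segment_subset hseg
      simpa using this
    have hfd0 : HasFDerivWithinAt w
        (ContinuousLinearMap.smulRight (1 : ℝ →L[ℝ] ℝ) (deriv w 0))
        (Set.Icc (0:ℝ) (2 * π)) 0 :=
      ((hdw 0).hasDerivAt.hasFDerivAt).hasFDerivWithinAt
    have hfd2 : HasFDerivWithinAt w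
        (ContinuousLinearMap.smulRight (1 : ℝ →L[ℝ] ℝ) (deriv w (2 * π)))
        (Set.Icc (0:ℝ) (2 * π)) (2 * π) :=
      ((hdw (2 * π)).hasDerivAt.hasFDerivAt).hasFDerivWithinAt
    have h1 : deriv w 0 ≤ 0 := by
      have := hmaxon0.hasFDerivWithinAt_nonpos hfd0 hcone1
      simpa using this
    have h2 : 0 ≤ deriv w (2 * π) := by
      have := hmaxon2π.hasFDerivWithinAt_nonpos hfd2 hcone2
      simp only [ContinuousLinearMap.smulRight_apply, ContinuousLinearMap.one_apply,
        smul_eq_mul] at this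
      linarith
    have hderiv0 : deriv w 0 = 0 := le_antisymm h1 (hdw0 ▸ h2)
    exact key_max w hw M hM hode 0 ⟨le_rfl, by linarith⟩ hmax0 hw0pos hderiv0
  rcases lt_or_eq_of_le ht₀.2 with h2π | h2π
  · rcases lt_or_eq_of_le ht₀.1 with h0 | h0
    · -- interior maximum
      have hlocal : IsLocalMax w t₀ := hmax'.isLocalMax (Icc_mem_nhds h0 h2π)
      have hderiv0 : deriv w t₀ = 0 := hlocal.deriv_eq_zero
      exact key_max w hw M hM hode t₀ ⟨ht₀.1, h2π⟩ hmax hpos hderiv0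
    · exact endpoint_case t₀ (Or.inl h0.symm) rfl
  · exact endpoint_case t₀ (Or.inr h2π) rfl
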